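/- With Q(σ,k) = 1/(−2πiσ + 4π²(i+μ)|k|² + 1), μ > 0, the 'hyperplane' integral over μ_1 + μ_2 = μ of |Q(μ_1)|²|Q(μ_2)|² satisfies ∫_{μ_1+μ_2=μ} |Q(μ_1)|² |Q(μ_2)|² ≲ |μ|_*^{-3}, where the integral means ∫_R dσ_1 Σ_{k_1 ∈ Z^3} with μ_2 = μ − μ_1, and |μ|_* = 1+|σ|^{1/2}+|k| for μ = (σ,k) ∈ R × Z^3. -/

import Mathlib

open MeasureTheory
open scoped ENNReal

noncomputable section

/-- The resolvent multiplier `Q(σ,k) = 1/(−2πiσ + 4π²(i+μ)|k|² + 1)` on `E = ℝ × ℤ³`. -/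
def Qker (μ : ℝ) (v : ℝ × (Fin 3 → ℤ)) : ℂ :=
  1 / (-(2 * (Real.pi : ℂ) * Complex.I * (v.1 : ℂ)) +
    4 * (Real.pi : ℂ) ^ 2 * (Complex.I + (μ : ℂ)) * (∑ i, (v.2 i : ℂ) ^ 2) + 1)

/-- The parabolic weight `|μ|_* = 1 + |σ|^{1/2} + |k|` on `E = ℝ × ℤ³`. -/
def pweight (v : ℝ × (Fin 3 → ℤ)) : ℝ :=
  1 + Real.sqrt |v.1| + Real.sqrt (∑ i, ((v.2 i : ℝ)) ^ 2)

/-- The measure on `E = ℝ × ℤ³`: Lebesgue measure times counting measure. -/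
def Emeasure : Measure (ℝ × (Fin 3 → ℤ)) :=
  (volume : Measure ℝ).prod Measure.count

namespace S17


abbrev E := ℝ × (Fin 3 → ℤ)

lemma sqrt_add_le {x y : ℝ} (hx : 0 ≤ x) (hy : 0 ≤ y) :
    Real.sqrt (x + y) ≤ Real.sqrt x + Real.sqrt y := by
  have h1 := Real.sq_sqrt hx
  have h2 := Real.sq_sqrt hy
  have h3 := Real.sqrt_nonneg x
  have h4 := Real.sqrt_nonneg y
  have h5 : x + y ≤ (Real.sqrt x + Real.sqrt y) ^ 2 := by nlinarith
  calc Real.sqrt (x + y) ≤ Real.sqrt ((Real.sqrt x + Real.sqrt y) ^ 2) := Real.sqrt_le_sqrt h5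
    _ = Real.sqrt x + Real.sqrt y := Real.sqrt_sq (by positivity)

lemma one_le_pweight (w : E) : 1 ≤ pweight w := by
  unfold pweight
  have := Real.sqrt_nonneg |w.1|
  have := Real.sqrt_nonneg (∑ i, ((w.2 i : ℝ)) ^ 2)
  linarith

def emb (k : Fin 3 → ℤ) : EuclideanSpace ℝ (Fin 3) := WithLp.toLp 2 (fun i => (k i : ℝ))

lemma emb_sub (a b : Fin 3 → ℤ) : emb (a - b) = emb a - emb b := by
  ext i
  simp [emb]

lemma knorm_eq (k : Fin 3 → ℤ) : Real.sqrt (∑ i, ((k i : ℝ)) ^ 2) = ‖emb k‖ := by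
  rw [EuclideanSpace.norm_eq]
  congr 1
  refine Finset.sum_congr rfl fun i _ => ?_
  rw [Real.norm_eq_abs, sq_abs]
  rfl

lemma pweight_triangle (v w : E) : pweight v ≤ pweight w + pweight (v - w) := by
  unfold pweight
  have h1 : Real.sqrt |v.1| ≤ Real.sqrt |w.1| + Real.sqrt |v.1 - w.1| := by
    calc Real.sqrt |v.1| ≤ Real.sqrt (|w.1| + |v.1 - w.1|) := by
          apply Real.sqrt_le_sqrt
          calc |v.1| = |w.1 + (v.1 - w.1)| := by ring_nf
            _ ≤ |w.1| + |v.1 - w.1| := abs_add_le _ _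
      _ ≤ Real.sqrt |w.1| + Real.sqrt |v.1 - w.1| := sqrt_add_le (abs_nonneg _) (abs_nonneg _)
  have h2 : Real.sqrt (∑ i, ((v.2 i : ℝ)) ^ 2) ≤
      Real.sqrt (∑ i, ((w.2 i : ℝ)) ^ 2) + Real.sqrt (∑ i, (((v - w).2 i : ℝ)) ^ 2) := by
    rw [knorm_eq, knorm_eq, knorm_eq]
    have : emb v.2 = emb w.2 + emb ((v - w).2) := by
      have : (v - w).2 = v.2 - w.2 := rfl
      rw [this, emb_sub]; abel
    rw [this]
    exact norm_add_le _ _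
  have h4 : Real.sqrt |(v - w).1| = Real.sqrt |v.1 - w.1| := by
    rw [Prod.fst_sub]
  linarith [h4]

lemma pweight_zero_sub (w : E) : pweight (0 - w) = pweight w := by
  unfold pweight
  have h1 : (0 - w).1 = -w.1 := by simp
  have h2 : ∀ i, ((0 - w).2 i : ℝ) = -(w.2 i : ℝ) := by intro i; simp
  rw [h1, abs_neg]
  congr 2
  refine Finset.sum_congr rfl fun i _ => ?_
  rw [h2 i]; ring

lemma measurable_pweight_sub (v : E) : Measurable (fun w : E => pweight (v - w)) := by
  have h1 : Measurable fun w : E => Real.sqrt |v.1 - w.1| :=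
    (Real.continuous_sqrt.comp continuous_abs).measurable.comp
      (measurable_const.sub measurable_fst)
  have h2 : Measurable fun w : E => Real.sqrt (∑ i, (((v.2 - w.2) i : ℝ)) ^ 2) := by
    exact (measurable_of_countable
      (fun k : Fin 3 → ℤ => Real.sqrt (∑ i, (((v.2 - k) i : ℝ)) ^ 2))).comp measurable_snd
  have : (fun w : E => pweight (v - w)) =
      fun w : E => 1 + Real.sqrt |v.1 - w.1| + Real.sqrt (∑ i, (((v.2 - w.2) i : ℝ)) ^ 2) := rfl
  rw [this]
  exact (measurable_const.add h1).add h2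

lemma measurable_pweight : Measurable (fun w : E => pweight w) := by
  have h1 : Measurable fun w : E => Real.sqrt |w.1| :=
    (Real.continuous_sqrt.comp continuous_abs).measurable.comp measurable_fst
  have h2 : Measurable fun w : E => Real.sqrt (∑ i, ((w.2 i : ℝ)) ^ 2) :=
    (measurable_of_countable
      (fun k : Fin 3 → ℤ => Real.sqrt (∑ i, ((k i : ℝ)) ^ 2))).comp measurable_snd
  exact (measurable_const.add h1).add h2

lemma exists_shell {x : ℝ} (hx : 1 ≤ x) : ∃ n : ℕ, (2:ℝ)^n ≤ x ∧ x < 2^(n+1) := by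
  have hx0 : (0:ℝ) < x := lt_of_lt_of_le one_pos hx
  refine ⟨⌊Real.logb 2 x⌋₊, ?_, ?_⟩
  · have h1 : (⌊Real.logb 2 x⌋₊ : ℝ) ≤ Real.logb 2 x :=
      Nat.floor_le (Real.logb_nonneg one_lt_two hx)
    calc (2:ℝ)^(⌊Real.logb 2 x⌋₊) = (2:ℝ)^((⌊Real.logb 2 x⌋₊ : ℝ)) := by
          rw [Real.rpow_natCast]
      _ ≤ (2:ℝ)^(Real.logb 2 x) := Real.rpow_le_rpow_of_exponent_le one_le_two h1
      _ = x := Real.rpow_logb two_pos (by norm_num) hx0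
  · have h2 : Real.logb 2 x < ⌊Real.logb 2 x⌋₊ + 1 := Nat.lt_floor_add_one _
    calc x = (2:ℝ)^(Real.logb 2 x) := (Real.rpow_logb two_pos (by norm_num) hx0).symm
      _ < (2:ℝ)^((⌊Real.logb 2 x⌋₊ : ℝ) + 1) := by
          apply Real.rpow_lt_rpow_of_exponent_lt one_lt_two
          exact_mod_cast h2
      _ = (2:ℝ)^(⌊Real.logb 2 x⌋₊ + 1) := by
          rw [← Real.rpow_natCast (2:ℝ) (⌊Real.logb 2 x⌋₊ + 1)]
          push_cast
          ring_nf

lemma exists_n0 {M : ℝ} (hM : 1/2 ≤ M) : ∃ n₀ : ℕ, M ≤ 2^n₀ ∧ (2:ℝ)^n₀ ≤ 2 * M := by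
  by_cases h : M ≤ 1
  · exact ⟨0, by simpa using h, by linarith⟩
  · push_neg at h
    obtain ⟨n, hn1, hn2⟩ := exists_shell h.le
    exact ⟨n + 1, hn2.le, by rw [pow_succ]; nlinarith⟩

lemma qker_bound (μ : ℝ) (hμ : 0 < μ) (w : E) :
    ‖Qker μ w‖ ≤ (3 * ((1 + (2 * Real.pi + 1) / (4 * Real.pi ^ 2 * μ)) + 1)) *
      ((pweight w) ^ 2)⁻¹ := by
  have hπ := Real.pi_gt_three
  set K₁ : ℝ := 1 + (2 * Real.pi + 1) / (4 * Real.pi ^ 2 * μ) with hK₁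
  have hK₁one : 1 ≤ K₁ := by
    have h : 0 ≤ (2 * Real.pi + 1) / (4 * Real.pi ^ 2 * μ) := by positivity
    rw [hK₁]; linarith
  have hK₁mul : K₁ * (4 * Real.pi ^ 2 * μ) = 4 * Real.pi ^ 2 * μ + (2 * Real.pi + 1) := by
    rw [hK₁, add_mul, div_mul_cancel₀ _ (mul_pos (by positivity) hμ).ne']; ring
  clear_value K₁
  set a : ℝ := ∑ i, ((w.2 i : ℝ)) ^ 2 with ha
  have ha0 : 0 ≤ a := by rw [ha]; positivity
  have dummyorder : True := trivial
  set z : ℂ := -(2 * (Real.pi : ℂ) * Complex.I * (w.1 : ℂ)) +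
    4 * (Real.pi : ℂ) ^ 2 * (Complex.I + (μ : ℂ)) * (∑ i, (w.2 i : ℂ) ^ 2) + 1 with hzdef
  have hQ : Qker μ w = 1 / z := rfl
  have hsum : (∑ i, (w.2 i : ℂ) ^ 2) = ((a : ℝ) : ℂ) := by
    rw [ha]; push_cast; ring
  clear_value a
  clear_value z
  have epow : ((Real.pi:ℂ))^2 = ((Real.pi^2 : ℝ):ℂ) := by push_cast; ring
  have epre : ((Real.pi:ℂ)^2).re = Real.pi^2 := by rw [epow]; exact Complex.ofReal_re _
  have epim : ((Real.pi:ℂ)^2).im = 0 := by rw [epow]; exact Complex.ofReal_im _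
  have hre : z.re = 1 + 4 * Real.pi ^ 2 * μ * a := by
    rw [hzdef, hsum]
    simp [Complex.add_re, Complex.mul_re, Complex.mul_im, Complex.I_re, Complex.I_im]
    rw [epre, epim]
    ring
  have him : z.im = 4 * Real.pi ^ 2 * a - 2 * Real.pi * w.1 := by
    rw [hzdef, hsum]
    simp [Complex.add_im, Complex.mul_re, Complex.mul_im, Complex.I_re, Complex.I_im]
    rw [epre, epim]
    ring
  have h1 : 1 + 4 * Real.pi ^ 2 * μ * a ≤ ‖z‖ := by
    calc 1 + 4 * Real.pi ^ 2 * μ * a = z.re := hre.symm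
      _ ≤ |z.re| := le_abs_self _
      _ ≤ ‖z‖ := Complex.abs_re_le_norm z
      _ = ‖z‖ := rfl
  have h2 : |4 * Real.pi ^ 2 * a - 2 * Real.pi * w.1| ≤ ‖z‖ := by
    calc |4 * Real.pi ^ 2 * a - 2 * Real.pi * w.1| = |z.im| := by rw [him]
      _ ≤ ‖z‖ := Complex.abs_im_le_norm z
      _ = ‖z‖ := rfl
  have hz0 : (0:ℝ) < ‖z‖ := by
    nlinarith [h1, mul_nonneg (mul_nonneg (by positivity : (0:ℝ) ≤ 4 * Real.pi ^ 2) hμ.le) ha0]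
  set s : ℝ := |w.1| with hs
  have hs0 : 0 ≤ s := by rw [hs]; exact abs_nonneg _
  have hsbound : 2 * Real.pi * s ≤ ‖z‖ + 4 * Real.pi ^ 2 * a := by
    have t1 : |2 * Real.pi * w.1| = 2 * Real.pi * s := by
      rw [hs, abs_mul, abs_of_pos (by linarith : (0:ℝ) < 2 * Real.pi)]
    have t2 : |2 * Real.pi * w.1| ≤ |2 * Real.pi * w.1 - 4 * Real.pi ^ 2 * a| + |4 * Real.pi ^ 2 * a| := by
      calc |2 * Real.pi * w.1| = |(2 * Real.pi * w.1 - 4 * Real.pi ^ 2 * a) + 4 * Real.pi ^ 2 * a| := by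
            ring_nf
        _ ≤ |2 * Real.pi * w.1 - 4 * Real.pi ^ 2 * a| + |4 * Real.pi ^ 2 * a| := abs_add_le _ _
    rw [t1, abs_sub_comm, abs_of_nonneg (by positivity : (0:ℝ) ≤ 4 * Real.pi ^ 2 * a)] at t2
    linarith
  clear_value s
  -- step B (multiplied by 2π): 2π(1+s+a) ≤ 2π(K₁+1)‖z‖
  have stepB : 1 + s + a ≤ (K₁ + 1) * ‖z‖ := by
    have hK₁z : K₁ * (1 + 4 * Real.pi ^ 2 * μ * a) ≤ K₁ * ‖z‖ :=
      mul_le_mul_of_nonneg_left h1 (by linarith)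
    have expand : K₁ * (1 + 4 * Real.pi ^ 2 * μ * a) = K₁ + K₁ * (4 * Real.pi ^ 2 * μ) * a := by
      ring
    rw [expand, hK₁mul] at hK₁z
    have l2 : 2 * Real.pi * (K₁ + (4 * Real.pi ^ 2 * μ + (2 * Real.pi + 1)) * a) ≤
        2 * Real.pi * (K₁ * ‖z‖) :=
      mul_le_mul_of_nonneg_left hK₁z (by linarith)
    have l3 : ‖z‖ ≤ 2 * Real.pi * ‖z‖ := by
      nlinarith [mul_nonneg (by linarith : (0:ℝ) ≤ 2 * Real.pi - 1) hz0.le]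
    have m1 : (0:ℝ) ≤ Real.pi ^ 3 * μ * a := by positivity
    have m2 : 2 * Real.pi * 1 ≤ 2 * Real.pi * K₁ :=
      mul_le_mul_of_nonneg_left hK₁one (by linarith)
    have goal2 : 2 * Real.pi * (1 + s + a) ≤ 2 * Real.pi * ((K₁ + 1) * ‖z‖) := by
      linarith [hsbound, l2, l3, m1, m2]
    have h2π : (0:ℝ) < 2 * Real.pi := by linarith
    exact le_of_mul_le_mul_left goal2 h2π
  -- step A
  set t1 : ℝ := Real.sqrt s with ht1
  set t2 : ℝ := Real.sqrt a with ht2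
  have e1 : t1 ^ 2 = s := Real.sq_sqrt hs0
  have e2 : t2 ^ 2 = a := Real.sq_sqrt ha0
  have ht10 : 0 ≤ t1 := by rw [ht1]; exact Real.sqrt_nonneg _
  have ht20 : 0 ≤ t2 := by rw [ht2]; exact Real.sqrt_nonneg _
  have stepA : (1 + t1 + t2) ^ 2 ≤ 3 * (1 + s + a) := by
    nlinarith [sq_nonneg (t1 - t2), sq_nonneg (t1 - 1), sq_nonneg (t2 - 1)]
  have hpw : pweight w = 1 + t1 + t2 := by rw [ht1, ht2, hs, ha]; rfl
  clear_value t1 t2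
  have key : (pweight w) ^ 2 ≤ (3 * (K₁ + 1)) * ‖z‖ := by
    rw [hpw]
    nlinarith [stepA, stepB, hz0.le, hK₁one]
  have hpw1 : (1:ℝ) ≤ pweight w := one_le_pweight w
  have hpw2 : (0:ℝ) < (pweight w) ^ 2 := by positivity
  rw [hQ, norm_div, norm_one]
  rw [div_le_iff₀ hz0]
  calc (1:ℝ) = ((pweight w)^2)⁻¹ * (pweight w)^2 := by field_simp
    _ ≤ ((pweight w)^2)⁻¹ * ((3 * (K₁ + 1)) * ‖z‖) := by
        apply mul_le_mul_of_nonneg_left key (by positivity)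
    _ = 3 * (K₁ + 1) * ((pweight w)^2)⁻¹ * ‖z‖ := by ring
lemma measure_ball_le (c : E) (m : ℕ) :
    Emeasure {w : E | pweight (c - w) < 2 ^ m} ≤ 2 ^ (5 * m + 7) := by
  set n : ℤ := 2 ^ m with hn
  set F : Finset (Fin 3 → ℤ) := Fintype.piFinset (fun i => Finset.Icc (c.2 i - n) (c.2 i + n))
    with hF
  have hsub : {w : E | pweight (c - w) < 2 ^ m} ⊆
      (Set.Ioo (c.1 - 4 ^ m) (c.1 + 4 ^ m)) ×ˢ (↑F : Set (Fin 3 → ℤ)) := by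
    intro w hw
    simp only [Set.mem_setOf_eq] at hw
    have h2m : (0:ℝ) < 2 ^ m := by positivity
    have hnn1 : 0 ≤ Real.sqrt |(c - w).1| := Real.sqrt_nonneg _
    have hnn2 : 0 ≤ Real.sqrt (∑ i, (((c - w).2 i : ℝ)) ^ 2) := Real.sqrt_nonneg _
    have hpw : pweight (c - w) =
        1 + Real.sqrt |(c - w).1| + Real.sqrt (∑ i, (((c - w).2 i : ℝ)) ^ 2) := rfl
    constructor
    · -- first coordinate
      have h1 : Real.sqrt |(c - w).1| < 2 ^ m := by rw [hpw] at hw; linarith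
      have h2 : |(c - w).1| < ((2:ℝ) ^ m) ^ 2 := (Real.sqrt_lt' h2m).mp h1
      have h3 : |c.1 - w.1| < (4:ℝ) ^ m := by
        have : ((2:ℝ) ^ m) ^ 2 = 4 ^ m := by
          rw [← pow_mul, mul_comm, pow_mul]; norm_num
        rw [Prod.fst_sub] at h2
        rw [← this]; exact h2
      rw [abs_lt] at h3
      rw [Set.mem_Ioo]
      exact ⟨by linarith [h3.1], by linarith [h3.2]⟩
    · -- second coordinate
      have h1 : Real.sqrt (∑ i, (((c - w).2 i : ℝ)) ^ 2) < 2 ^ m := by rw [hpw] at hw; linarith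
      have h2 : (∑ i, (((c - w).2 i : ℝ)) ^ 2) < ((2:ℝ) ^ m) ^ 2 := (Real.sqrt_lt' h2m).mp h1
      simp only [Finset.mem_coe, Fintype.mem_piFinset, Finset.mem_Icc, hF]
      intro i
      have h3 : (((c - w).2 i : ℝ)) ^ 2 ≤ ∑ j, (((c - w).2 j : ℝ)) ^ 2 := by
        apply Finset.single_le_sum (f := fun j => (((c - w).2 j : ℝ)) ^ 2)
        · intro j _; positivity
        · exact Finset.mem_univ i
      have h4 : |((c - w).2 i : ℝ)| < 2 ^ m := by
        have := lt_of_le_of_lt h3 h2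
        have habs : |((c - w).2 i : ℝ)| = Real.sqrt ((((c - w).2 i : ℝ)) ^ 2) :=
          (Real.sqrt_sq_eq_abs _).symm
        rw [habs]
        exact (Real.sqrt_lt' h2m).mpr this
      have h5 : ((c - w).2 i : ℝ) = ((c.2 i - w.2 i : ℤ) : ℝ) := by
        push_cast
        simp [Prod.snd_sub]
      rw [h5] at h4
      have h6 : |c.2 i - w.2 i| < n := by
        rw [hn]
        exact_mod_cast h4
      rw [abs_lt] at h6
      exact ⟨by linarith [h6.1], by linarith [h6.2]⟩
  haveI hsf : SFinite (Measure.count : Measure (Fin 3 → ℤ)) := by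
    rw [Measure.count]; infer_instance
  calc Emeasure {w : E | pweight (c - w) < 2 ^ m}
      ≤ Emeasure ((Set.Ioo (c.1 - 4 ^ m) (c.1 + 4 ^ m)) ×ˢ (↑F : Set (Fin 3 → ℤ))) :=
        measure_mono hsub
    _ = volume (Set.Ioo (c.1 - 4 ^ m) (c.1 + 4 ^ m)) * Measure.count (↑F : Set (Fin 3 → ℤ)) := by
        rw [Emeasure, Measure.prod_prod]
    _ ≤ 2 ^ (2 * m + 1) * 2 ^ (3 * m + 6) := by
        apply mul_le_mul'
        · rw [Real.volume_Ioo]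
          have : c.1 + 4 ^ m - (c.1 - 4 ^ m) = 2 * 4 ^ m := by ring
          rw [this]
          have h2 : ((2:ℝ) * 4 ^ m) = 2 ^ (2 * m + 1) := by
            rw [pow_succ, pow_mul]; norm_num; ring
          rw [h2, ENNReal.ofReal_pow (by norm_num : (0:ℝ) ≤ 2)]
          norm_num
        · rw [Measure.count_apply_finset]
          have hcard : F.card = ((2 * n + 1).toNat) ^ 3 := by
            have h7 : F.card = ∏ i : Fin 3, (2 * n + 1).toNat := by
              rw [hF, Fintype.card_piFinset]
              apply Finset.prod_congr rfl
              intro i _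
              rw [Int.card_Icc]
              congr 1
              ring
            rw [h7, Finset.prod_const]
            simp
          rw [hcard]
          have hle : (2 * n + 1).toNat ≤ 2 ^ (m + 2) := by
            have h8 : (2 * n + 1 : ℤ) ≤ 2 ^ (m + 2) := by
              have h9 : (1:ℤ) ≤ 2 ^ m := by exact_mod_cast Nat.one_le_two_pow
              rw [hn, pow_add]
              norm_num
              linarith
            have h10 : ((2 ^ (m + 2) : ℕ) : ℤ) = 2 ^ (m + 2) := by push_cast; rfl
            rw [← h10] at h8
            exact Int.toNat_le.mpr h8
          calc ((((2 * n + 1).toNat) ^ 3 : ℕ) : ℝ≥0∞) ≤ (((2 ^ (m + 2) : ℕ) ^ 3 : ℕ) : ℝ≥0∞) := by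
                exact_mod_cast Nat.pow_le_pow_left hle 3
            _ = 2 ^ (3 * m + 6) := by
                push_cast
                rw [← pow_mul]
                congr 1
                ring
    _ = 2 ^ (5 * m + 7) := by
        rw [← pow_add]
        congr 1
        ring
lemma real_sum_bound {M : ℝ} (hM : 1/2 ≤ M) (N : ℕ) :
    ∑ n ∈ Finset.range N, (2:ℝ)^n * ((max ((2:ℝ)^n) M)^4)⁻¹ ≤ 4 * (M^3)⁻¹ := by
  have hM0 : (0:ℝ) < M := by linarith
  obtain ⟨n₀, hn₀1, hn₀2⟩ := exists_n0 hM
  rw [← Finset.sum_filter_add_sum_filter_not (Finset.range N) (fun n => n < n₀)]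
  have piece1 : ∑ n ∈ (Finset.range N).filter (fun n => n < n₀),
      (2:ℝ)^n * ((max ((2:ℝ)^n) M)^4)⁻¹ ≤ 2 * (M^3)⁻¹ := by
    have step1 : ∑ n ∈ (Finset.range N).filter (fun n => n < n₀),
        (2:ℝ)^n * ((max ((2:ℝ)^n) M)^4)⁻¹ ≤
        ∑ n ∈ (Finset.range N).filter (fun n => n < n₀), (2:ℝ)^n * (M^4)⁻¹ := by
      apply Finset.sum_le_sum
      intro n _
      apply mul_le_mul_of_nonneg_left _ (by positivity)
      apply inv_anti₀ (by positivity)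
      apply pow_le_pow_left₀ hM0.le (le_max_right _ _)
    have step2 : ∑ n ∈ (Finset.range N).filter (fun n => n < n₀), (2:ℝ)^n * (M^4)⁻¹ ≤
        (∑ n ∈ Finset.range n₀, (2:ℝ)^n) * (M^4)⁻¹ := by
      rw [← Finset.sum_mul]
      apply mul_le_mul_of_nonneg_right _ (by positivity)
      apply Finset.sum_le_sum_of_subset_of_nonneg
      · intro n hn
        simp only [Finset.mem_filter, Finset.mem_range] at hn ⊢
        exact hn.2
      · intro n _ _; positivity
    have step3 : (∑ n ∈ Finset.range n₀, (2:ℝ)^n) = 2^n₀ - 1 := by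
      rw [geom_sum_eq (by norm_num : (2:ℝ) ≠ 1)]
      norm_num
    have step4 : ((2:ℝ)^n₀ - 1) * (M^4)⁻¹ ≤ (2*M) * (M^4)⁻¹ := by
      apply mul_le_mul_of_nonneg_right _ (by positivity)
      linarith
    have step5 : ((2:ℝ)*M) * (M^4)⁻¹ = 2 * (M^3)⁻¹ := by
      field_simp
    linarith [step1, step2, step3 ▸ step4, step5 ▸ step4]
  have piece2 : ∑ n ∈ (Finset.range N).filter (fun n => ¬ n < n₀),
      (2:ℝ)^n * ((max ((2:ℝ)^n) M)^4)⁻¹ ≤ 2 * (M^3)⁻¹ := by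
    have step1 : ∑ n ∈ (Finset.range N).filter (fun n => ¬ n < n₀),
        (2:ℝ)^n * ((max ((2:ℝ)^n) M)^4)⁻¹ ≤
        ∑ n ∈ (Finset.range N).filter (fun n => ¬ n < n₀), ((8:ℝ)⁻¹)^n := by
      apply Finset.sum_le_sum
      intro n _
      have h1 : (2:ℝ)^n * ((max ((2:ℝ)^n) M)^4)⁻¹ ≤ (2:ℝ)^n * (((2:ℝ)^n)^4)⁻¹ := by
        apply mul_le_mul_of_nonneg_left _ (by positivity)
        apply inv_anti₀ (by positivity)
        apply pow_le_pow_left₀ (by positivity) (le_max_left _ _)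
      have h2 : (2:ℝ)^n * (((2:ℝ)^n)^4)⁻¹ = ((8:ℝ)⁻¹)^n := by
        have l : (((2:ℝ)^n)^4)⁻¹ = ((2:ℝ)⁻¹)^(4*n) := by
          rw [← pow_mul, ← inv_pow]
          congr 1
          ring
        have r : ((8:ℝ)⁻¹)^n = ((2:ℝ)⁻¹)^(3*n) := by
          rw [show ((8:ℝ)⁻¹) = ((2:ℝ)⁻¹)^(3:ℕ) by norm_num, ← pow_mul]
        rw [l, r, show 4*n = n + 3*n by ring, pow_add, ← mul_assoc, ← mul_pow]
        norm_num
      linarith [h1, h2 ▸ h1]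
    have step2 : ∑ n ∈ (Finset.range N).filter (fun n => ¬ n < n₀), ((8:ℝ)⁻¹)^n ≤
        ∑ n ∈ Finset.Ico n₀ (N + n₀), ((8:ℝ)⁻¹)^n := by
      apply Finset.sum_le_sum_of_subset_of_nonneg
      · intro n hn
        simp only [Finset.mem_filter, Finset.mem_range, not_lt, Finset.mem_Ico] at hn ⊢
        omega
      · intro n _ _; positivity
    have step3 : ∑ n ∈ Finset.Ico n₀ (N + n₀), ((8:ℝ)⁻¹)^n ≤ ((8:ℝ)⁻¹)^n₀ * 2 := by
      rw [Finset.sum_Ico_eq_sum_range]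
      have : ∀ k, ((8:ℝ)⁻¹)^(n₀ + k) = ((8:ℝ)⁻¹)^n₀ * ((8:ℝ)⁻¹)^k := fun k => pow_add _ _ _
      rw [Finset.sum_congr rfl (fun k _ => this k), ← Finset.mul_sum]
      apply mul_le_mul_of_nonneg_left _ (by positivity)
      have hs : ∑ k ∈ Finset.range (N + n₀ - n₀), ((8:ℝ)⁻¹)^k ≤ (1 - (8:ℝ)⁻¹)⁻¹ := by
        apply (summable_geometric_of_lt_one (by norm_num) (by norm_num)).sum_le_tsum _
          (fun k _ => by positivity) |>.trans
        rw [tsum_geometric_of_lt_one (by norm_num) (by norm_num)]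
      calc ∑ k ∈ Finset.range (N + n₀ - n₀), ((8:ℝ)⁻¹)^k ≤ (1 - (8:ℝ)⁻¹)⁻¹ := hs
        _ ≤ 2 := by norm_num
    have step4 : ((8:ℝ)⁻¹)^n₀ ≤ (M^3)⁻¹ := by
      have h1 : ((8:ℝ)⁻¹)^n₀ = (((2:ℝ)^n₀)^3)⁻¹ := by
        have l : (((2:ℝ)^n₀)^3)⁻¹ = ((2:ℝ)⁻¹)^(n₀*3) := by
          rw [← pow_mul, ← inv_pow]
        rw [l, show ((8:ℝ)⁻¹) = ((2:ℝ)⁻¹)^(3:ℕ) by norm_num, ← pow_mul]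
        congr 1
        ring
      rw [h1]
      apply inv_anti₀ (by positivity)
      apply pow_le_pow_left₀ hM0.le hn₀1
    calc ∑ n ∈ (Finset.range N).filter (fun n => ¬ n < n₀), (2:ℝ)^n * ((max ((2:ℝ)^n) M)^4)⁻¹
        ≤ ((8:ℝ)⁻¹)^n₀ * 2 := le_trans step1 (le_trans step2 step3)
      _ ≤ (M^3)⁻¹ * 2 := mul_le_mul_of_nonneg_right step4 (by norm_num)
      _ = 2 * (M^3)⁻¹ := by ring
  linarith


end S17

open S17 in
/-- the hyperplane integral
`∫_{μ₁+μ₂=μ} |Q(μ₁)|²|Q(μ₂)|² = ∫_ℝ dσ₁ Σ_{k₁} |Q(σ₁,k₁)|²|Q(μ-μ₁)|² ≲ |μ|_*^{-3}`. -/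
theorem statement17 (μ : ℝ) (hμ : 0 < μ) :
    ∃ C : ℝ, 0 < C ∧ ∀ v : ℝ × (Fin 3 → ℤ),
      ∫⁻ w, (‖Qker μ w‖₊ : ℝ≥0∞) ^ (2 : ℕ) * (‖Qker μ (v - w)‖₊ : ℝ≥0∞) ^ (2 : ℕ)
          ∂Emeasure ≤
        ENNReal.ofReal (C * (pweight v) ^ (-3 : ℝ)) := by
  classical
  have hπ := Real.pi_gt_three
  set K : ℝ := 3 * ((1 + (2 * Real.pi + 1) / (4 * Real.pi ^ 2 * μ)) + 1) with hKdef
  have hK0 : 0 < K := by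
    rw [hKdef]
    have : 0 ≤ (2 * Real.pi + 1) / (4 * Real.pi ^ 2 * μ) := by positivity
    nlinarith
  have hQb : ∀ w : E, ‖Qker μ w‖ ≤ K * ((pweight w)^2)⁻¹ := fun w => qker_bound μ hμ w
  clear_value K
  refine ⟨K^4 * 2^18, by positivity, fun v => ?_⟩
  set R : ℝ := pweight v with hR
  have hR1 : 1 ≤ R := by rw [hR]; exact one_le_pweight v
  clear_value R
  set M : ℝ := R / 2 with hMdef
  have hM12 : 1/2 ≤ M := by rw [hMdef]; linarith
  have hM0 : 0 < M := by linarith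
  clear_value M
  set A : ℕ → Set E := fun n => {w : E | pweight w ≤ pweight (v - w) ∧
      (2:ℝ)^n ≤ pweight w ∧ pweight w < 2^(n+1)} with hA
  set B : ℕ → Set E := fun n => {w : E | pweight (v - w) < pweight w ∧
      (2:ℝ)^n ≤ pweight (v - w) ∧ pweight (v - w) < 2^(n+1)} with hB
  set G : ℕ → ℝ := fun n => (K * (((2:ℝ)^n)^2)⁻¹)^2 * (K * ((max ((2:ℝ)^n) M)^2)⁻¹)^2 with hG
  have hGnn : ∀ n, 0 ≤ G n := fun n => by rw [hG]; positivity
  have hp1 : Measurable (fun w : E => pweight w) := measurable_pweight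
  have hp2 : Measurable (fun w : E => pweight (v - w)) := measurable_pweight_sub v
  have hmeasA : ∀ n, MeasurableSet (A n) := by
    intro n
    have : A n = {w : E | pweight w ≤ pweight (v - w)} ∩
        ({w : E | (2:ℝ)^n ≤ pweight w} ∩ {w : E | pweight w < 2^(n+1)}) := by
      rw [hA]; ext w; simp only [Set.mem_setOf_eq, Set.mem_inter_iff]
    rw [this]
    exact (measurableSet_le hp1 hp2).inter
      ((measurableSet_le measurable_const hp1).inter (measurableSet_lt hp1 measurable_const))
  have hmeasB : ∀ n, MeasurableSet (B n) := by
    intro n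
    have : B n = {w : E | pweight (v - w) < pweight w} ∩
        ({w : E | (2:ℝ)^n ≤ pweight (v - w)} ∩ {w : E | pweight (v - w) < 2^(n+1)}) := by
      rw [hB]; ext w; simp only [Set.mem_setOf_eq, Set.mem_inter_iff]
    rw [this]
    exact (measurableSet_lt hp2 hp1).inter
      ((measurableSet_le measurable_const hp2).inter (measurableSet_lt hp2 measurable_const))
  -- pointwise bound
  have hpt : ∀ w : E, (‖Qker μ w‖₊ : ℝ≥0∞) ^ (2:ℕ) * (‖Qker μ (v - w)‖₊ : ℝ≥0∞) ^ (2:ℕ) ≤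
      ∑' n, ((A n).indicator (fun _ => ENNReal.ofReal (G n)) w +
             (B n).indicator (fun _ => ENNReal.ofReal (G n)) w) := by
    intro w
    have hx1 : 1 ≤ pweight w := one_le_pweight w
    have hy1 : 1 ≤ pweight (v - w) := one_le_pweight (v - w)
    have htri : R ≤ pweight w + pweight (v - w) := by rw [hR]; exact pweight_triangle v w
    have hLHS : (‖Qker μ w‖₊ : ℝ≥0∞) ^ (2:ℕ) * (‖Qker μ (v - w)‖₊ : ℝ≥0∞) ^ (2:ℕ) =
        ENNReal.ofReal (‖Qker μ w‖^2 * ‖Qker μ (v - w)‖^2) := by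
      rw [ENNReal.ofReal_mul (by positivity),
        ENNReal.ofReal_pow (norm_nonneg _), ENNReal.ofReal_pow (norm_nonneg _),
        ofReal_norm, ofReal_norm, enorm_eq_nnnorm, enorm_eq_nnnorm]
    have key : ∀ n : ℕ, (2:ℝ)^n ≤ pweight w → pweight w < 2^(n+1) →
        max ((2:ℝ)^n) M ≤ pweight (v - w) →
        ‖Qker μ w‖^2 * ‖Qker μ (v - w)‖^2 ≤ G n := by
      intro n h1 h2 h3
      have b1 : ‖Qker μ w‖ ≤ K * (((2:ℝ)^n)^2)⁻¹ := by
        refine le_trans (hQb w) (mul_le_mul_of_nonneg_left ?_ hK0.le)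
        apply inv_anti₀ (by positivity)
        apply pow_le_pow_left₀ (by positivity) h1
      have b2 : ‖Qker μ (v - w)‖ ≤ K * ((max ((2:ℝ)^n) M)^2)⁻¹ := by
        refine le_trans (hQb (v - w)) (mul_le_mul_of_nonneg_left ?_ hK0.le)
        apply inv_anti₀ (by positivity)
        apply pow_le_pow_left₀ (by positivity) h3
      rw [hG]
      have p1 : ‖Qker μ w‖^2 ≤ (K * (((2:ℝ)^n)^2)⁻¹)^2 :=
        pow_le_pow_left₀ (norm_nonneg _) b1 2
      have p2 : ‖Qker μ (v - w)‖^2 ≤ (K * ((max ((2:ℝ)^n) M)^2)⁻¹)^2 :=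
        pow_le_pow_left₀ (norm_nonneg _) b2 2
      exact mul_le_mul p1 p2 (by positivity) (by positivity)
    by_cases hcase : pweight w ≤ pweight (v - w)
    · obtain ⟨n, hn1, hn2⟩ := exists_shell hx1
      have hyM : M ≤ pweight (v - w) := by rw [hMdef] at hM12 ⊢; linarith
      have hymax : max ((2:ℝ)^n) M ≤ pweight (v - w) := max_le (le_trans hn1 hcase) hyM
      have hwA : w ∈ A n := by rw [hA]; exact ⟨hcase, hn1, hn2⟩
      calc (‖Qker μ w‖₊ : ℝ≥0∞) ^ (2:ℕ) * (‖Qker μ (v - w)‖₊ : ℝ≥0∞) ^ (2:ℕ)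
          = ENNReal.ofReal (‖Qker μ w‖^2 * ‖Qker μ (v - w)‖^2) := hLHS
        _ ≤ ENNReal.ofReal (G n) := ENNReal.ofReal_le_ofReal (key n hn1 hn2 hymax)
        _ ≤ (A n).indicator (fun _ => ENNReal.ofReal (G n)) w +
            (B n).indicator (fun _ => ENNReal.ofReal (G n)) w := by
            rw [Set.indicator_of_mem hwA]
            exact le_self_add
        _ ≤ ∑' n, ((A n).indicator (fun _ => ENNReal.ofReal (G n)) w +
             (B n).indicator (fun _ => ENNReal.ofReal (G n)) w) := ENNReal.le_tsum n
    · push_neg at hcase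
      obtain ⟨n, hn1, hn2⟩ := exists_shell hy1
      have hyM : M ≤ pweight w := by rw [hMdef] at hM12 ⊢; linarith
      have hymax : max ((2:ℝ)^n) M ≤ pweight w := max_le (le_trans hn1 hcase.le) hyM
      have hwB : w ∈ B n := by rw [hB]; exact ⟨hcase, hn1, hn2⟩
      have key2 : ‖Qker μ w‖^2 * ‖Qker μ (v - w)‖^2 ≤ G n := by
        have b1 : ‖Qker μ (v - w)‖ ≤ K * (((2:ℝ)^n)^2)⁻¹ := by
          refine le_trans (hQb (v - w)) (mul_le_mul_of_nonneg_left ?_ hK0.le)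
          apply inv_anti₀ (by positivity)
          apply pow_le_pow_left₀ (by positivity) hn1
        have b2 : ‖Qker μ w‖ ≤ K * ((max ((2:ℝ)^n) M)^2)⁻¹ := by
          refine le_trans (hQb w) (mul_le_mul_of_nonneg_left ?_ hK0.le)
          apply inv_anti₀ (by positivity)
          apply pow_le_pow_left₀ (by positivity) hymax
        rw [hG]
        have p1 : ‖Qker μ (v - w)‖^2 ≤ (K * (((2:ℝ)^n)^2)⁻¹)^2 :=
          pow_le_pow_left₀ (norm_nonneg _) b1 2
        have p2 : ‖Qker μ w‖^2 ≤ (K * ((max ((2:ℝ)^n) M)^2)⁻¹)^2 :=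
          pow_le_pow_left₀ (norm_nonneg _) b2 2
        calc ‖Qker μ w‖^2 * ‖Qker μ (v - w)‖^2
            ≤ (K * ((max ((2:ℝ)^n) M)^2)⁻¹)^2 * (K * (((2:ℝ)^n)^2)⁻¹)^2 :=
              mul_le_mul p2 p1 (by positivity) (by positivity)
          _ = (K * (((2:ℝ)^n)^2)⁻¹)^2 * (K * ((max ((2:ℝ)^n) M)^2)⁻¹)^2 := by ring
      calc (‖Qker μ w‖₊ : ℝ≥0∞) ^ (2:ℕ) * (‖Qker μ (v - w)‖₊ : ℝ≥0∞) ^ (2:ℕ)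
          = ENNReal.ofReal (‖Qker μ w‖^2 * ‖Qker μ (v - w)‖^2) := hLHS
        _ ≤ ENNReal.ofReal (G n) := ENNReal.ofReal_le_ofReal key2
        _ ≤ (A n).indicator (fun _ => ENNReal.ofReal (G n)) w +
            (B n).indicator (fun _ => ENNReal.ofReal (G n)) w := by
            rw [Set.indicator_of_mem hwB]
            exact le_add_self
        _ ≤ ∑' n, ((A n).indicator (fun _ => ENNReal.ofReal (G n)) w +
             (B n).indicator (fun _ => ENNReal.ofReal (G n)) w) := ENNReal.le_tsum n
  -- measure bounds
  have hmA : ∀ n, Emeasure (A n) ≤ 2 ^ (5*n+12) := by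
    intro n
    have hsub : A n ⊆ {w : E | pweight ((0:E) - w) < 2^(n+1)} := by
      intro w hw
      rw [hA] at hw
      simp only [Set.mem_setOf_eq] at hw ⊢
      rw [pweight_zero_sub]
      exact hw.2.2
    calc Emeasure (A n) ≤ Emeasure {w : E | pweight ((0:E) - w) < 2^(n+1)} := measure_mono hsub
      _ ≤ 2 ^ (5*(n+1)+7) := measure_ball_le 0 (n+1)
      _ = 2 ^ (5*n+12) := by congr 1 <;> ring
  have hmB : ∀ n, Emeasure (B n) ≤ 2 ^ (5*n+12) := by
    intro n
    have hsub : B n ⊆ {w : E | pweight (v - w) < 2^(n+1)} := by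
      intro w hw
      rw [hB] at hw
      exact hw.2.2
    calc Emeasure (B n) ≤ Emeasure {w : E | pweight (v - w) < 2^(n+1)} := measure_mono hsub
      _ ≤ 2 ^ (5*(n+1)+7) := measure_ball_le v (n+1)
      _ = 2 ^ (5*n+12) := by congr 1 <;> ring
  -- the integral estimate
  calc ∫⁻ w, (‖Qker μ w‖₊ : ℝ≥0∞) ^ (2:ℕ) * (‖Qker μ (v - w)‖₊ : ℝ≥0∞) ^ (2:ℕ) ∂Emeasure
      ≤ ∫⁻ w, ∑' n, ((A n).indicator (fun _ => ENNReal.ofReal (G n)) w +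
          (B n).indicator (fun _ => ENNReal.ofReal (G n)) w) ∂Emeasure := lintegral_mono hpt
    _ = ∑' n, ∫⁻ w, ((A n).indicator (fun _ => ENNReal.ofReal (G n)) w +
          (B n).indicator (fun _ => ENNReal.ofReal (G n)) w) ∂Emeasure := by
        apply lintegral_tsum
        intro n
        exact ((measurable_const.indicator (hmeasA n)).add
          (measurable_const.indicator (hmeasB n))).aemeasurable
    _ = ∑' n, (ENNReal.ofReal (G n) * Emeasure (A n) + ENNReal.ofReal (G n) * Emeasure (B n)) := by
        apply tsum_congr
        intro n
        rw [lintegral_add_left (measurable_const.indicator (hmeasA n)),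
          lintegral_indicator_const (hmeasA n), lintegral_indicator_const (hmeasB n)]
    _ ≤ ∑' n, ENNReal.ofReal (G n * 2^(5*n+13)) := by
        apply ENNReal.tsum_le_tsum
        intro n
        have e1 : ENNReal.ofReal (G n * 2^(5*n+13)) =
            ENNReal.ofReal (G n) * 2^(5*n+13) := by
          rw [ENNReal.ofReal_mul (hGnn n), ENNReal.ofReal_pow (by norm_num : (0:ℝ) ≤ 2)]
          norm_num
        rw [e1]
        calc ENNReal.ofReal (G n) * Emeasure (A n) + ENNReal.ofReal (G n) * Emeasure (B n)
            ≤ ENNReal.ofReal (G n) * 2^(5*n+12) + ENNReal.ofReal (G n) * 2^(5*n+12) := by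
              exact add_le_add (mul_le_mul_right (hmA n) _) (mul_le_mul_right (hmB n) _)
          _ = ENNReal.ofReal (G n) * 2^(5*n+13) := by
              rw [← mul_add]
              congr 1
              rw [pow_succ]
              ring
    _ ≤ ENNReal.ofReal (K^4 * 2^18 * R ^ (-3 : ℝ)) := by
        apply ENNReal.summable.tsum_le_of_sum_le
        intro s
        obtain ⟨N, hsN⟩ := Finset.exists_nat_subset_range s
        have hterm : ∀ n, G n * 2^(5*n+13) =
            (K^4 * 2^13) * ((2:ℝ)^n * ((max ((2:ℝ)^n) M)^4)⁻¹) := by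
          intro n
          rw [hG]
          have h2n : (0:ℝ) < (2:ℝ)^n := by positivity
          have hmax : (0:ℝ) < max ((2:ℝ)^n) M := lt_of_lt_of_le h2n (le_max_left _ _)
          field_simp
          ring
        calc ∑ n ∈ s, ENNReal.ofReal (G n * 2^(5*n+13))
            ≤ ∑ n ∈ Finset.range N, ENNReal.ofReal (G n * 2^(5*n+13)) :=
              Finset.sum_le_sum_of_subset_of_nonneg hsN (fun _ _ _ => zero_le)
          _ = ENNReal.ofReal (∑ n ∈ Finset.range N, G n * 2^(5*n+13)) :=
              (ENNReal.ofReal_sum_of_nonneg (fun n _ => by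
                have := hGnn n; positivity)).symm
          _ ≤ ENNReal.ofReal (K^4 * 2^18 * R ^ (-3 : ℝ)) := by
              apply ENNReal.ofReal_le_ofReal
              have hsum : ∑ n ∈ Finset.range N, G n * 2^(5*n+13) =
                  (K^4 * 2^13) * ∑ n ∈ Finset.range N,
                    (2:ℝ)^n * ((max ((2:ℝ)^n) M)^4)⁻¹ := by
                rw [Finset.mul_sum]
                exact Finset.sum_congr rfl (fun n _ => hterm n)
              rw [hsum]
              have hbound := real_sum_bound hM12 N
              have hrpow : R ^ (-3 : ℝ) = (R^3)⁻¹ := by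
                rw [show ((-3:ℝ)) = -((3:ℕ):ℝ) by norm_num, Real.rpow_neg (by linarith),
                  Real.rpow_natCast]
              have hRM : (M^3)⁻¹ = 8 * (R^3)⁻¹ := by
                rw [hMdef]
                have hR0 : (0:ℝ) < R := by linarith
                field_simp
                ring
              rw [hrpow]
              calc (K^4 * 2^13) * ∑ n ∈ Finset.range N, (2:ℝ)^n * ((max ((2:ℝ)^n) M)^4)⁻¹
                  ≤ (K^4 * 2^13) * (4 * (M^3)⁻¹) :=
                    mul_le_mul_of_nonneg_left hbound (by positivity)
                _ = K^4 * 2^18 * (R^3)⁻¹ := by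
                    rw [hRM]
                    ring
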